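/- Let d = 2. For every ε > 0 there exists a constant C = C(ε) such that, for all integers a_1, a_2 with 0 < |a_1| ≤ |a_2| and all reals M, H ≥ 1, one has N_{(a_1, −a_1, a_2, −a_2)}(M, H) ≤ C·M^ε·(M²H/|a_2| + MH/|a_1| + M²). -/

import Mathlib

open Finset Real


lemma tau_bound (δ : ℝ) (hδ : 0 < δ) :
    ∃ C : ℝ, 1 ≤ C ∧ ∀ n : ℕ, n ≠ 0 → (n.divisors.card : ℝ) ≤ C * (n : ℝ) ^ δ := by
  have hlog2 : (0:ℝ) < Real.log 2 := Real.log_pos (by norm_num)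
  set K : ℝ := 1 + 1 / (δ * Real.log 2) with hK
  have hK1 : 1 ≤ K := le_add_of_nonneg_right (by positivity)
  set B : ℕ := ⌈(2:ℝ) ^ (1/δ)⌉₊ with hB
  refine ⟨K ^ B, one_le_pow₀ hK1, fun n hn => ?_⟩
  -- pointwise bound
  have key : ∀ p ∈ n.primeFactors,
      ((n.factorization p + 1 : ℕ) : ℝ) ≤ (if p < B then K else 1) * ((p:ℝ) ^ n.factorization p) ^ δ := by
    intro p hp
    have hp2 : 2 ≤ p := (Nat.prime_of_mem_primeFactors hp).two_le
    set k := n.factorization p with hk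
    have hppos : (0:ℝ) < (p:ℝ) := by positivity
    have hpow : ((p:ℝ) ^ k) ^ δ = ((p:ℝ) ^ δ) ^ k := by
      rw [← Real.rpow_natCast (p:ℝ) k, ← Real.rpow_mul hppos.le, mul_comm,
        Real.rpow_mul hppos.le, Real.rpow_natCast]
    by_cases hpb : p < B
    · simp only [hpb, if_true]
      have h2k : (1 : ℝ) + k * (δ * Real.log 2) ≤ ((p:ℝ) ^ k) ^ δ := by
        have h1 : ((2:ℝ) ^ k : ℝ) ≤ (p:ℝ) ^ k := by
          exact pow_le_pow_left₀ (by norm_num) (by exact_mod_cast hp2) k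
        have h2 : ((2:ℝ) ^ k) ^ δ ≤ ((p:ℝ) ^ k) ^ δ :=
          Real.rpow_le_rpow (by positivity) h1 hδ.le
        have h3 : ((2:ℝ) ^ k) ^ δ = Real.exp (k * (δ * Real.log 2)) := by
          rw [← Real.rpow_natCast (2:ℝ) k, ← Real.rpow_mul (by norm_num),
            Real.rpow_def_of_pos (by norm_num)]
          ring_nf
        have h4 := Real.add_one_le_exp ((k : ℝ) * (δ * Real.log 2))
        rw [h3] at h2
        linarith
      have hKd : K * (δ * Real.log 2) ≥ 1 + δ * Real.log 2 := by
        rw [hK]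
        have : (1 / (δ * Real.log 2)) * (δ * Real.log 2) = 1 := by
          field_simp
        nlinarith
      have hX : (0:ℝ) ≤ ((p:ℝ) ^ k) ^ δ := by positivity
      have : K * (1 + k * (δ * Real.log 2)) ≥ (k:ℝ) + 1 := by
        have hdl : 0 < δ * Real.log 2 := by positivity
        nlinarith [mul_le_mul_of_nonneg_left h2k (by linarith : (0:ℝ) ≤ K)]
      push_cast
      nlinarith [mul_le_mul_of_nonneg_left h2k (by linarith : (0:ℝ) ≤ K)]
    · simp only [hpb, if_false, one_mul]
      have hpB : ((2:ℝ) ^ (1/δ)) ≤ (p:ℝ) := by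
        have := Nat.ceil_le.mp (le_of_not_gt (hB ▸ hpb) : B ≤ p)
        exact_mod_cast this
      have h2 : (2:ℝ) ≤ (p:ℝ) ^ δ := by
        have := Real.rpow_le_rpow (by positivity) hpB hδ.le
        rwa [← Real.rpow_mul (by norm_num), one_div, inv_mul_cancel₀ (ne_of_gt hδ), Real.rpow_one] at this
      rw [hpow]
      calc ((k + 1 : ℕ) : ℝ) ≤ (2:ℝ) ^ k := by
            exact_mod_cast (Nat.lt_two_pow_self (n := k))
        _ ≤ ((p:ℝ) ^ δ) ^ k := pow_le_pow_left₀ (by norm_num) h2 k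
  -- assemble
  have hτ : (n.divisors.card : ℝ) = ∏ p ∈ n.primeFactors, ((n.factorization p + 1 : ℕ) : ℝ) := by
    rw [Nat.card_divisors hn]; push_cast; ring
  have hn' : ((n:ℝ)) ^ δ = ∏ p ∈ n.primeFactors, ((p:ℝ) ^ n.factorization p) ^ δ := by
    have h1 : (n : ℝ) = ∏ p ∈ n.primeFactors, ((p:ℝ) ^ n.factorization p) := by
      conv_lhs => rw [← Nat.factorization_prod_pow_eq_self hn]
      rw [Nat.factorization, Finsupp.prod]
      push_cast
      rfl
    rw [h1, ← Real.finset_prod_rpow _ _ (fun p _ => by positivity)]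
  rw [hτ, hn']
  calc (∏ p ∈ n.primeFactors, ((n.factorization p + 1 : ℕ) : ℝ))
      ≤ ∏ p ∈ n.primeFactors, ((if p < B then K else 1) * ((p:ℝ) ^ n.factorization p) ^ δ) :=
        Finset.prod_le_prod (fun p _ => by positivity) key
    _ = (∏ p ∈ n.primeFactors, (if p < B then K else 1)) *
          ∏ p ∈ n.primeFactors, ((p:ℝ) ^ n.factorization p) ^ δ := Finset.prod_mul_distrib
    _ ≤ K ^ B * ∏ p ∈ n.primeFactors, ((p:ℝ) ^ n.factorization p) ^ δ := by
        refine mul_le_mul_of_nonneg_right ?_ (Finset.prod_nonneg fun p _ => by positivity)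
        · -- product of ifs ≤ K ^ B
          have hsplit := Finset.prod_filter_mul_prod_filter_not n.primeFactors (· < B)
            (fun p => if p < B then K else 1)
          rw [← hsplit]
          have h1 : (∏ p ∈ n.primeFactors.filter (· < B), (if p < B then K else 1)) = 
              K ^ (n.primeFactors.filter (· < B)).card := by
            rw [Finset.prod_congr rfl (fun p hp => if_pos (Finset.mem_filter.mp hp).2),
              Finset.prod_const]
          have h2 : (∏ p ∈ n.primeFactors.filter (fun p => ¬ p < B), (if p < B then K else 1)) = 1 :=
            Finset.prod_eq_one (fun p hp => if_neg (Finset.mem_filter.mp hp).2)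
          rw [h1, h2, mul_one]
          have hcard : (n.primeFactors.filter (· < B)).card ≤ B := by
            have : n.primeFactors.filter (· < B) ⊆ Finset.range B := fun p hp =>
              Finset.mem_range.mpr (Finset.mem_filter.mp hp).2
            simpa using Finset.card_le_card this
          exact pow_le_pow_right₀ hK1 hcard


lemma real_card_le_mul {α β : Type*} [DecidableEq α] [DecidableEq β] (s : Finset α) (g : α → β) (r : ℝ)
    (h : ∀ b ∈ s.image g, (((s.filter fun a => g a = b).card : ℕ) : ℝ) ≤ r) :
    (s.card : ℝ) ≤ r * (s.image g).card := by
  have hc := Finset.card_eq_sum_card_fiberwise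
    (f := g) (s := s) (t := s.image g) (fun x hx => Finset.mem_image_of_mem g hx)
  rw [hc]
  push_cast
  calc (∑ b ∈ s.image g, ((s.filter fun a => g a = b).card : ℝ))
      ≤ ∑ b ∈ s.image g, r := Finset.sum_le_sum h
    _ = r * (s.image g).card := by rw [Finset.sum_const, nsmul_eq_mul, mul_comm]

lemma card_int_interval (s : Finset ℤ) (A B : ℝ) (hAB : A ≤ B)
    (h : ∀ x ∈ s, A ≤ (x : ℝ) ∧ (x : ℝ) ≤ B) : (s.card : ℝ) ≤ B - A + 1 := by
  have hsub : s ⊆ Finset.Icc ⌈A⌉ ⌊B⌋ := by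
    intro x hx
    obtain ⟨h1, h2⟩ := h x hx
    exact Finset.mem_Icc.mpr ⟨Int.ceil_le.mpr h1, Int.le_floor.mpr h2⟩
  have h1 : (s.card : ℝ) ≤ ((Finset.Icc ⌈A⌉ ⌊B⌋).card : ℝ) := by
    exact_mod_cast Finset.card_le_card hsub
  rw [Int.card_Icc] at h1
  rcases le_or_gt (⌈A⌉ : ℤ) (⌊B⌋ + 1) with hle | hlt
  · have : ((((⌊B⌋ + 1 - ⌈A⌉).toNat : ℤ)) : ℝ) ≤ B - A + 1 := by
      rw [Int.toNat_of_nonneg (by omega)]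
      have hB := Int.floor_le B
      have hA := Int.le_ceil A
      push_cast
      linarith
    calc (s.card : ℝ) ≤ _ := h1
      _ ≤ B - A + 1 := by exact_mod_cast this
  · have : (⌊B⌋ + 1 - ⌈A⌉).toNat = 0 := by omega
    rw [this] at h1
    norm_num at h1
    rw [h1]
    simp
    linarith


def intDivisors (m : ℤ) : Finset ℤ :=
  (m.natAbs.divisors.image (fun d : ℕ => (d : ℤ))) ∪ (m.natAbs.divisors.image (fun d : ℕ => -(d : ℤ)))

lemma mem_intDivisors {m w : ℤ} (hm : m ≠ 0) (hw : w ∣ m) : w ∈ intDivisors m := by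
  have hw0 : w ≠ 0 := by rintro rfl; exact hm (zero_dvd_iff.mp hw)
  have h1 : w.natAbs ∈ m.natAbs.divisors :=
    Nat.mem_divisors.mpr ⟨Int.natAbs_dvd_natAbs.mpr hw, Int.natAbs_ne_zero.mpr hm⟩
  rcases Int.natAbs_eq w with h | h
  · exact Finset.mem_union_left _ (Finset.mem_image.mpr ⟨w.natAbs, h1, h.symm⟩)
  · exact Finset.mem_union_right _ (Finset.mem_image.mpr ⟨w.natAbs, h1, by rw [← h]⟩)

lemma card_intDivisors (m : ℤ) : (intDivisors m).card ≤ 2 * m.natAbs.divisors.card := by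
  calc (intDivisors m).card ≤ _ + _ := Finset.card_union_le _ _
    _ ≤ 2 * m.natAbs.divisors.card := by
        have := Finset.card_image_le (s := m.natAbs.divisors) (f := fun d : ℕ => (d : ℤ))
        have := Finset.card_image_le (s := m.natAbs.divisors) (f := fun d : ℕ => -(d : ℤ))
        omega

lemma sq_diff_count (C δ : ℝ) (hC0 : 0 ≤ C) (hδ : 0 ≤ δ)
    (hC : ∀ n : ℕ, n ≠ 0 → ((n.divisors.card : ℕ) : ℝ) ≤ C * (n : ℝ) ^ δ)
    (M : ℝ) (hM : 1 ≤ M) (F : Finset (Fin 4 → ℤ)) (i j : Fin 4) (hij : i ≠ j)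
    (c R : ℝ) (hR : 0 ≤ R)
    (hbd : ∀ x ∈ F, (M ≤ ((x i : ℤ) : ℝ) ∧ ((x i : ℤ) : ℝ) ≤ 2 * M) ∧
      (M ≤ ((x j : ℤ) : ℝ) ∧ ((x j : ℤ) : ℝ) ≤ 2 * M))
    (hne : ∀ x ∈ F, x i ≠ x j)
    (hint : ∀ x ∈ F, |(((x i)^2 - (x j)^2 : ℤ) : ℝ) - c| ≤ R)
    (hfix : ∀ x ∈ F, ∀ y ∈ F, ∀ t, t ≠ i → t ≠ j → x t = y t) :
    (F.card : ℝ) ≤ (2 * C * (4 * M ^ 2) ^ δ) * (2 * R + 1) := by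
  classical
  set r : ℝ := 2 * C * (4 * M ^ 2) ^ δ with hr
  have hr0 : 0 ≤ r := by positivity
  have hxpos : ∀ x ∈ F, 1 ≤ x i ∧ 1 ≤ x j := by
    intro x hx
    obtain ⟨⟨h1, _⟩, ⟨h2, _⟩⟩ := hbd x hx
    have e1 : (1:ℝ) ≤ ((x i : ℤ) : ℝ) := by linarith
    have e2 : (1:ℝ) ≤ ((x j : ℤ) : ℝ) := by linarith
    exact ⟨by exact_mod_cast e1, by exact_mod_cast e2⟩
  have hfiber : ∀ b ∈ F.image (fun x => (x i)^2 - (x j)^2),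
      (((F.filter fun a => (a i)^2 - (a j)^2 = b).card : ℕ) : ℝ) ≤ r := by
    intro b hb
    obtain ⟨x₀, hx₀, hb₀⟩ := Finset.mem_image.mp hb
    have hb0 : b ≠ 0 := by
      rw [← hb₀]
      obtain ⟨h1, h2⟩ := hxpos x₀ hx₀
      have hne₀ := hne x₀ hx₀
      have h3 : (x₀ i)^2 - (x₀ j)^2 = (x₀ i - x₀ j) * (x₀ i + x₀ j) := by ring
      rw [h3]
      exact mul_ne_zero (sub_ne_zero.mpr hne₀) (by omega)
    have hinj : ((F.filter fun a => (a i)^2 - (a j)^2 = b).card : ℕ) ≤ (intDivisors b).card := by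
      apply Finset.card_le_card_of_injOn (fun x => x i - x j)
      · intro x hx
        obtain ⟨hxF, hxb⟩ := Finset.mem_filter.mp hx
        apply mem_intDivisors hb0
        exact ⟨x i + x j, by rw [← hxb]; ring⟩
      · intro x hx y hy hxy
        obtain ⟨hxF, hxb⟩ := Finset.mem_filter.mp hx
        obtain ⟨hyF, hyb⟩ := Finset.mem_filter.mp hy
        have hw0 : x i - x j ≠ 0 := sub_ne_zero.mpr (hne x hxF)
        have hd : x i - x j = y i - y j := hxy
        have hsum : x i + x j = y i + y j := by
          have h1 : (x i - x j) * (x i + x j) = b := by rw [← hxb]; ring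
          have h2 : (y i - y j) * (y i + y j) = b := by rw [← hyb]; ring
          rw [← hd] at h2
          exact mul_left_cancel₀ hw0 (h1.trans h2.symm)
        have hii : x i = y i := by linarith [hd, hsum]
        have hjj : x j = y j := by linarith [hd, hsum]
        funext t
        by_cases hti : t = i
        · rw [hti]; exact hii
        · by_cases htj : t = j
          · rw [htj]; exact hjj
          · exact hfix x hxF y hyF t hti htj
    have hbabs : ((b.natAbs : ℕ) : ℝ) ≤ 4 * M ^ 2 := by
      obtain ⟨⟨ha1, ha2⟩, ⟨ha3, ha4⟩⟩ := hbd x₀ hx₀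
      have : ((b.natAbs : ℕ) : ℝ) = |((b : ℤ) : ℝ)| := by
        rw [Nat.cast_natAbs]
        exact Int.cast_abs
      rw [this, ← hb₀, abs_le]
      push_cast
      constructor <;> nlinarith
    have hdiv : (((intDivisors b).card : ℕ) : ℝ) ≤ r := by
      have h1 : (((intDivisors b).card : ℕ) : ℝ) ≤ 2 * ((b.natAbs.divisors.card : ℕ) : ℝ) := by
        exact_mod_cast card_intDivisors b
      have h2 : ((b.natAbs.divisors.card : ℕ) : ℝ) ≤ C * ((b.natAbs : ℕ) : ℝ) ^ δ :=
        hC b.natAbs (Int.natAbs_ne_zero.mpr hb0)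
      have h3 : ((b.natAbs : ℕ) : ℝ) ^ δ ≤ (4 * M ^ 2) ^ δ :=
        Real.rpow_le_rpow (by positivity) hbabs hδ
      calc (((intDivisors b).card : ℕ) : ℝ) ≤ 2 * ((b.natAbs.divisors.card : ℕ) : ℝ) := h1
        _ ≤ 2 * (C * ((b.natAbs : ℕ) : ℝ) ^ δ) := by linarith
        _ ≤ 2 * (C * (4 * M ^ 2) ^ δ) := by nlinarith [mul_le_mul_of_nonneg_left h3 hC0]
        _ = r := by rw [hr]; ring
    calc (((F.filter fun a => (a i)^2 - (a j)^2 = b).card : ℕ) : ℝ)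
        ≤ ((intDivisors b).card : ℝ) := by exact_mod_cast hinj
      _ ≤ r := hdiv
  have main := real_card_le_mul F (fun x => (x i)^2 - (x j)^2) r hfiber
  refine main.trans ?_
  have himg : (((F.image fun x => (x i)^2 - (x j)^2).card : ℕ) : ℝ) ≤ 2 * R + 1 := by
    have h4 := card_int_interval (F.image fun x => (x i)^2 - (x j)^2) (c - R) (c + R)
      (by linarith) ?_
    · linarith
    · intro b hb
      obtain ⟨x, hx, rfl⟩ := Finset.mem_image.mp hb
      have h5 := hint x hx
      rw [abs_le] at h5
      constructor <;> linarith [h5.1, h5.2]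
  exact mul_le_mul_of_nonneg_left himg hr0


/-- The number of `x ∈ ℤ⁴` with `M ≤ x_j ≤ 2M` and
`|a_1(x_1² − x_2²) + a_2(x_3² − x_4²)| ≤ H`, i.e. `N_{(a₁,−a₁,a₂,−a₂)}(M,H)` for `d = 2`. -/
noncomputable def NcountPairSq (a₁ a₂ : ℤ) (M H : ℝ) : ℕ :=
  Set.ncard {x : Fin 4 → ℤ | (∀ i, M ≤ (x i : ℝ) ∧ (x i : ℝ) ≤ 2 * M) ∧
    |(a₁ : ℝ) * ((x 0 : ℝ) ^ 2 - (x 1 : ℝ) ^ 2)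
      + (a₂ : ℝ) * ((x 2 : ℝ) ^ 2 - (x 3 : ℝ) ^ 2)| ≤ H}

set_option maxHeartbeats 1000000 in
/-- Lemma 2b for `d = 2`: for `0 < |a₁| ≤ |a₂|`,
`N_{(a₁,−a₁,a₂,−a₂)}(M,H) ≪_ε M^ε(M²H/|a₂| + MH/|a₁| + M²)`. -/
theorem NcountPairSq_bound :
    ∀ ε > (0 : ℝ), ∃ C > (0 : ℝ), ∀ a₁ a₂ : ℤ, a₁ ≠ 0 → |a₁| ≤ |a₂| →
      ∀ M H : ℝ, 1 ≤ M → 1 ≤ H →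
      (NcountPairSq a₁ a₂ M H : ℝ)
        ≤ C * M ^ ε *
          (M ^ 2 * H / |(a₂ : ℝ)| + M * H / |(a₁ : ℝ)| + M ^ 2) := by
  intro ε hε
  obtain ⟨C, hC1, hC⟩ := tau_bound (ε/2) (by linarith)
  have hC0 : (0:ℝ) ≤ C := by linarith
  set K : ℝ := 2 * C * (2:ℝ) ^ ε with hKdef
  have hK2 : (2:ℝ) ≤ K := by
    have h1 : (1:ℝ) ≤ (2:ℝ) ^ ε := Real.one_le_rpow (by norm_num) hε.le
    nlinarith
  refine ⟨8 * K + 4, by linarith, ?_⟩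
  intro a₁ a₂ ha₁ haa M H hM hH
  classical
  have ha₂ : a₂ ≠ 0 := by
    intro h; rw [h] at haa; simp only [abs_zero] at haa
    exact ha₁ (abs_nonpos_iff.mp haa)
  set A1 : ℝ := |(a₁ : ℝ)| with hA1def
  set A2 : ℝ := |(a₂ : ℝ)| with hA2def
  have hA1 : (1:ℝ) ≤ A1 := by
    rw [hA1def, ← Int.cast_abs]
    exact_mod_cast Int.one_le_abs ha₁
  have hA12 : A1 ≤ A2 := by
    rw [hA1def, hA2def, ← Int.cast_abs, ← Int.cast_abs]
    exact_mod_cast haa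
  have hA2 : (1:ℝ) ≤ A2 := hA1.trans hA12
  have hA1p : (0:ℝ) < A1 := by linarith
  have hA2p : (0:ℝ) < A2 := by linarith
  have hM0 : (0:ℝ) < M := by linarith
  -- the ambient finset
  set I : Finset ℤ := Finset.Icc ⌈M⌉ ⌊2*M⌋ with hIdef
  have hIcard : (I.card : ℝ) ≤ 2 * M := by
    have := card_int_interval I M (2*M) (by linarith) ?_
    · linarith
    · intro x hx
      obtain ⟨h1, h2⟩ := Finset.mem_Icc.mp hx
      exact ⟨Int.ceil_le.mp h1, Int.le_floor.mp h2⟩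
  have hImem : ∀ x : ℤ, x ∈ I → M ≤ (x:ℝ) ∧ (x:ℝ) ≤ 2*M := by
    intro x hx
    obtain ⟨h1, h2⟩ := Finset.mem_Icc.mp hx
    exact ⟨Int.ceil_le.mp h1, Int.le_floor.mp h2⟩
  set P : (Fin 4 → ℤ) → Prop := fun x =>
    |(a₁ : ℝ) * ((x 0 : ℝ) ^ 2 - (x 1 : ℝ) ^ 2)
      + (a₂ : ℝ) * ((x 2 : ℝ) ^ 2 - (x 3 : ℝ) ^ 2)| ≤ H with hPdef
  set G : Finset (Fin 4 → ℤ) := (Fintype.piFinset fun _ => I).filter P with hGdef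
  -- step 0 : ncard ≤ G.card
  have step0 : (NcountPairSq a₁ a₂ M H : ℝ) ≤ (G.card : ℝ) := by
    have hsub : {x : Fin 4 → ℤ | (∀ i, M ≤ (x i : ℝ) ∧ (x i : ℝ) ≤ 2 * M) ∧
        |(a₁ : ℝ) * ((x 0 : ℝ) ^ 2 - (x 1 : ℝ) ^ 2)
          + (a₂ : ℝ) * ((x 2 : ℝ) ^ 2 - (x 3 : ℝ) ^ 2)| ≤ H} ⊆ ↑G := by
      intro x hx
      obtain ⟨h1, h2⟩ := hx
      simp only [hGdef, Finset.coe_filter, Set.mem_setOf_eq, Fintype.mem_piFinset]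
      refine ⟨fun i => ?_, h2⟩
      exact Finset.mem_Icc.mpr ⟨Int.ceil_le.mpr (h1 i).1, Int.le_floor.mpr (h1 i).2⟩
    have h9 := Set.ncard_le_ncard hsub G.finite_toSet
    rw [Set.ncard_coe_finset] at h9
    have h10 : NcountPairSq a₁ a₂ M H ≤ G.card := by
      unfold NcountPairSq
      exact h9
    exact_mod_cast h10
  have hGmem : ∀ x ∈ G, (∀ i, M ≤ ((x i : ℤ):ℝ) ∧ ((x i : ℤ):ℝ) ≤ 2*M) ∧ P x := by
    intro x hx
    obtain ⟨h1, h2⟩ := Finset.mem_filter.mp hx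
    refine ⟨fun i => hImem _ (Fintype.mem_piFinset.mp h1 i), h2⟩
  -- split
  set G₁ : Finset (Fin 4 → ℤ) := G.filter (fun x => x 2 = x 3 ∧ x 0 = x 1) with hG1def
  set G₂ : Finset (Fin 4 → ℤ) := G.filter (fun x => x 2 = x 3 ∧ x 0 ≠ x 1) with hG2def
  set G₃ : Finset (Fin 4 → ℤ) := G.filter (fun x => x 2 ≠ x 3) with hG3def
  have hsplit : (G.card : ℝ) ≤ (G₁.card : ℝ) + (G₂.card : ℝ) + (G₃.card : ℝ) := by
    have hsub : G ⊆ G₁ ∪ G₂ ∪ G₃ := by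
      intro x hx
      by_cases h23 : x 2 = x 3
      · by_cases h01 : x 0 = x 1
        · exact Finset.mem_union_left _ (Finset.mem_union_left _
            (Finset.mem_filter.mpr ⟨hx, h23, h01⟩))
        · exact Finset.mem_union_left _ (Finset.mem_union_right _
            (Finset.mem_filter.mpr ⟨hx, h23, h01⟩))
      · exact Finset.mem_union_right _ (Finset.mem_filter.mpr ⟨hx, h23⟩)
    have h1 := Finset.card_le_card hsub
    have h2 := Finset.card_union_le (G₁ ∪ G₂) G₃
    have h3 := Finset.card_union_le G₁ G₂
    push_cast
    have : G.card ≤ G₁.card + G₂.card + G₃.card := by omega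
    exact_mod_cast this
  -- G₁ bound
  have hG1 : (G₁.card : ℝ) ≤ 4 * M^2 := by
    have hinj : G₁.card ≤ (I ×ˢ I).card := by
      apply Finset.card_le_card_of_injOn (fun x => (x 1, x 3))
      · intro x hx
        obtain ⟨hxG, _, _⟩ := Finset.mem_filter.mp hx
        have h := Fintype.mem_piFinset.mp (Finset.mem_filter.mp hxG).1
        exact Finset.mem_product.mpr ⟨h 1, h 3⟩
      · intro x hx y hy hxy
        obtain ⟨hxG, hx23, hx01⟩ := Finset.mem_filter.mp hx
        obtain ⟨hyG, hy23, hy01⟩ := Finset.mem_filter.mp hy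
        have h1 : x 1 = y 1 := congrArg Prod.fst hxy
        have h3 : x 3 = y 3 := congrArg Prod.snd hxy
        funext t
        fin_cases t
        · show x 0 = y 0
          rw [hx01, hy01]; exact h1
        · exact h1
        · show x 2 = y 2
          rw [hx23, hy23]; exact h3
        · exact h3
    have hIc : ((I ×ˢ I).card : ℝ) ≤ (2*M) * (2*M) := by
      rw [Finset.card_product]
      push_cast
      have h0 : (0:ℝ) ≤ (I.card : ℝ) := by positivity
      nlinarith
    calc (G₁.card : ℝ) ≤ ((I ×ˢ I).card : ℝ) := by exact_mod_cast hinj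
      _ ≤ (2*M)*(2*M) := hIc
      _ = 4 * M^2 := by ring
  -- the common divisor-count factor
  set r₂ : ℝ := 2 * C * (4 * M ^ 2) ^ (ε/2) with hr2def
  have hr20 : 0 ≤ r₂ := by positivity
  have hr2eq : r₂ = K * M ^ ε := by
    rw [hr2def, hKdef]
    have h4 : (4 * M ^ 2 : ℝ) ^ (ε/2) = (4:ℝ)^(ε/2) * (M^2:ℝ)^(ε/2) :=
      Real.mul_rpow (by norm_num) (by positivity)
    have h5 : (4:ℝ)^(ε/2) = (2:ℝ)^ε := by
      rw [show (4:ℝ) = (2:ℝ)^(2:ℝ) by norm_num [Real.rpow_natCast]]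
      rw [← Real.rpow_mul (by norm_num), show (2:ℝ)*(ε/2) = ε by ring]
    have h6 : (M^2:ℝ)^(ε/2) = M^ε := by
      rw [← Real.rpow_natCast M 2, ← Real.rpow_mul hM0.le]
      norm_num
      rw [show (2:ℝ)*(ε/2) = ε by ring]
    rw [h4, h5, h6]; ring
  -- G₂ bound
  have hG2 : (G₂.card : ℝ) ≤ (r₂ * (2 * (H / A1) + 1)) * (2 * M) := by
    have hfib : ∀ b ∈ G₂.image (fun x => x 3),
        (((G₂.filter fun x => x 3 = b).card : ℕ) : ℝ) ≤ r₂ * (2 * (H / A1) + 1) := by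
      intro b hb
      apply sq_diff_count C (ε/2) hC0 (by linarith) hC M hM _ 0 1 (by decide)
        0 (H / A1) (by positivity)
      · intro x hx
        obtain ⟨hxG2, _⟩ := Finset.mem_filter.mp hx
        obtain ⟨hbd, _⟩ := hGmem x (Finset.mem_filter.mp hxG2).1
        exact ⟨hbd 0, hbd 1⟩
      · intro x hx
        obtain ⟨hxG2, _⟩ := Finset.mem_filter.mp hx
        exact (Finset.mem_filter.mp hxG2).2.2
      · intro x hx
        obtain ⟨hxG2, hx3⟩ := Finset.mem_filter.mp hx
        obtain ⟨hx23, _⟩ := (Finset.mem_filter.mp hxG2).2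
        obtain ⟨hbd, hP⟩ := hGmem x (Finset.mem_filter.mp hxG2).1
        rw [hPdef] at hP
        have h23 : ((x 2 : ℤ):ℝ) = ((x 3 : ℤ):ℝ) := by exact_mod_cast hx23
        rw [h23] at hP
        simp only [sub_self, mul_zero, add_zero] at hP
        have habs : |(a₁:ℝ)| * |((x 0:ℤ):ℝ)^2 - ((x 1:ℤ):ℝ)^2| ≤ H := by
          rw [← abs_mul]; exact hP
        have h2 : |((x 0:ℤ):ℝ)^2 - ((x 1:ℤ):ℝ)^2| ≤ H / A1 := by
          rw [le_div_iff₀ hA1p]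
          calc |((x 0:ℤ):ℝ)^2 - ((x 1:ℤ):ℝ)^2| * A1
              = A1 * |((x 0:ℤ):ℝ)^2 - ((x 1:ℤ):ℝ)^2| := by ring
            _ ≤ H := habs
        push_cast
        simpa using h2
      · intro x hx y hy t ht0 ht1
        obtain ⟨hxG2, hx3⟩ := Finset.mem_filter.mp hx
        obtain ⟨hyG2, hy3⟩ := Finset.mem_filter.mp hy
        obtain ⟨hx23, _⟩ := (Finset.mem_filter.mp hxG2).2
        obtain ⟨hy23, _⟩ := (Finset.mem_filter.mp hyG2).2
        fin_cases t
        · exact absurd rfl ht0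
        · exact absurd rfl ht1
        · show x 2 = y 2
          rw [hx23, hy23, hx3, hy3]
        · show x 3 = y 3
          rw [hx3, hy3]
    have main := real_card_le_mul G₂ (fun x => x 3) (r₂ * (2 * (H / A1) + 1)) hfib
    refine main.trans ?_
    have himg : (((G₂.image fun x => x 3).card : ℕ) : ℝ) ≤ 2 * M := by
      have hsub : G₂.image (fun x => x 3) ⊆ I := by
        intro b hb
        obtain ⟨x, hx, rfl⟩ := Finset.mem_image.mp hb
        have hxG := (Finset.mem_filter.mp hx).1
        exact Fintype.mem_piFinset.mp (Finset.mem_filter.mp hxG).1 3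
      calc (((G₂.image fun x => x 3).card : ℕ) : ℝ) ≤ (I.card : ℝ) := by
            exact_mod_cast Finset.card_le_card hsub
        _ ≤ 2 * M := hIcard
    exact mul_le_mul_of_nonneg_left himg (by positivity)
  -- G₃ bound
  have hG3 : (G₃.card : ℝ) ≤ (r₂ * (2 * (H / A2) + 1)) * (4 * M^2) := by
    have hfib : ∀ b ∈ G₃.image (fun x => (x 0, x 1)),
        (((G₃.filter fun x => (x 0, x 1) = b).card : ℕ) : ℝ) ≤ r₂ * (2 * (H / A2) + 1) := by
      intro b hb
      set c : ℝ := -((a₁:ℝ) * ((b.1:ℝ)^2 - (b.2:ℝ)^2)) / (a₂:ℝ) with hcdef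
      apply sq_diff_count C (ε/2) hC0 (by linarith) hC M hM _ 2 3 (by decide)
        c (H / A2) (by positivity)
      · intro x hx
        obtain ⟨hxG3, _⟩ := Finset.mem_filter.mp hx
        obtain ⟨hbd, _⟩ := hGmem x (Finset.mem_filter.mp hxG3).1
        exact ⟨hbd 2, hbd 3⟩
      · intro x hx
        obtain ⟨hxG3, _⟩ := Finset.mem_filter.mp hx
        exact (Finset.mem_filter.mp hxG3).2
      · intro x hx
        obtain ⟨hxG3, hxb⟩ := Finset.mem_filter.mp hx
        obtain ⟨hbd, hP⟩ := hGmem x (Finset.mem_filter.mp hxG3).1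
        rw [hPdef] at hP
        have hb1 : x 0 = b.1 := congrArg Prod.fst hxb
        have hb2 : x 1 = b.2 := congrArg Prod.snd hxb
        rw [hb1, hb2] at hP
        have ha2r : ((a₂:ℤ):ℝ) ≠ 0 := by
          simpa using (Int.cast_ne_zero (α := ℝ)).mpr ha₂
        have heq : (((x 2)^2 - (x 3)^2 : ℤ) : ℝ) - c
            = ((a₁ : ℝ) * ((b.1:ℝ)^2 - (b.2:ℝ)^2)
              + (a₂ : ℝ) * (((x 2):ℝ)^2 - ((x 3):ℝ)^2)) / (a₂:ℝ) := by
          rw [hcdef]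
          push_cast
          field_simp
          ring
        rw [heq, abs_div]
        rw [div_le_div_iff₀ (by rw [hA2def] at *; positivity) hA2p]
        calc |(a₁ : ℝ) * ((b.1:ℝ)^2 - (b.2:ℝ)^2)
              + (a₂ : ℝ) * (((x 2):ℝ)^2 - ((x 3):ℝ)^2)| * A2
            ≤ H * A2 := by
              have := hP
              nlinarith [abs_nonneg ((a₁ : ℝ) * ((b.1:ℝ)^2 - (b.2:ℝ)^2)
                + (a₂ : ℝ) * (((x 2):ℝ)^2 - ((x 3):ℝ)^2))]
          _ = H * |(a₂:ℝ)| := by rw [hA2def]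
      · intro x hx y hy t ht2 ht3
        obtain ⟨hxG3, hxb⟩ := Finset.mem_filter.mp hx
        obtain ⟨hyG3, hyb⟩ := Finset.mem_filter.mp hy
        have e := hxb.trans hyb.symm
        have e0 : x 0 = y 0 := congrArg Prod.fst e
        have e1 : x 1 = y 1 := congrArg Prod.snd e
        fin_cases t
        · exact e0
        · exact e1
        · exact absurd rfl ht2
        · exact absurd rfl ht3
    have main := real_card_le_mul G₃ (fun x => (x 0, x 1)) (r₂ * (2 * (H / A2) + 1)) hfib
    refine main.trans ?_
    have himg : (((G₃.image fun x => (x 0, x 1)).card : ℕ) : ℝ) ≤ 4 * M^2 := by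
      have hsub : G₃.image (fun x => (x 0, x 1)) ⊆ I ×ˢ I := by
        intro b hb
        obtain ⟨x, hx, rfl⟩ := Finset.mem_image.mp hb
        have hxG := (Finset.mem_filter.mp hx).1
        have h := Fintype.mem_piFinset.mp (Finset.mem_filter.mp hxG).1
        exact Finset.mem_product.mpr ⟨h 0, h 1⟩
      have h0 : (0:ℝ) ≤ (I.card : ℝ) := by positivity
      calc (((G₃.image fun x => (x 0, x 1)).card : ℕ) : ℝ) ≤ ((I ×ˢ I).card : ℝ) := by
            exact_mod_cast Finset.card_le_card hsub
        _ ≤ 4 * M^2 := by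
            rw [Finset.card_product]; push_cast; nlinarith
    exact mul_le_mul_of_nonneg_left himg (by positivity)
  -- assemble
  have hMε : (1:ℝ) ≤ M ^ ε := Real.one_le_rpow hM hε.le
  have hMε0 : (0:ℝ) ≤ M ^ ε := by positivity
  set u1 : ℝ := H / A1 with hu1def
  set u2 : ℝ := H / A2 with hu2def
  have hu2 : 0 ≤ u2 := by positivity
  have hu12 : u2 ≤ u1 := by
    rw [hu1def, hu2def]
    exact div_le_div_of_nonneg_left (by linarith) hA1p hA12
  have hMM : M ≤ M ^ 2 := by nlinarith
  have goal_eq : M ^ 2 * H / A2 + M * H / A1 + M ^ 2 = M^2 * u2 + M * u1 + M^2 := by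
    rw [hu1def, hu2def]; ring
  calc (NcountPairSq a₁ a₂ M H : ℝ) ≤ (G.card : ℝ) := step0
    _ ≤ (G₁.card : ℝ) + (G₂.card : ℝ) + (G₃.card : ℝ) := hsplit
    _ ≤ 4 * M^2 + (r₂ * (2 * u1 + 1)) * (2 * M) + (r₂ * (2 * u2 + 1)) * (4 * M^2) := by
        linarith [hG1, hG2, hG3]
    _ = 4 * M^2 + (K * M^ε) * (2 * u1 + 1) * (2 * M) + (K * M^ε) * (2 * u2 + 1) * (4 * M^2) := by
        rw [hr2eq]
    _ ≤ (8 * K + 4) * M ^ ε * (M^2 * u2 + M * u1 + M^2) := by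
        have hK0 : (0:ℝ) ≤ K := by linarith
        have hu1 : (0:ℝ) ≤ u1 := by positivity
        have h1 : K * (M^ε * M) ≤ K * (M^ε * M^2) :=
          mul_le_mul_of_nonneg_left (mul_le_mul_of_nonneg_left hMM hMε0) hK0
        have h2 : M^2 ≤ M^ε * M^2 := by
          have := mul_le_mul_of_nonneg_right hMε (sq_nonneg M)
          simpa using this
        have h3 : (0:ℝ) ≤ M^ε * (M^2 * u2) := by positivity
        have h4 : (0:ℝ) ≤ M^ε * (M * u1) := by positivity
        have h5 : (0:ℝ) ≤ K * (M^ε * (M * u1)) := by positivity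
        have h6 : (0:ℝ) ≤ K * (M^ε * (M^2 * u2)) := by positivity
        have h7 : (0:ℝ) ≤ K * (M^ε * M^2) := by positivity
        nlinarith [h1, h2, h3, h4, h5, h6, h7]
    _ = (8 * K + 4) * M ^ ε * (M ^ 2 * H / A2 + M * H / A1 + M ^ 2) := by rw [goal_eq]
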